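/- Let (E,‖·‖) be a complex Banach space, p, q, p', q' positive integers and s ≥ 0. If f̂ = Σ_{n,m≥0} a_{n,m} x₁ⁿx₂^m ∈ E[[x₁,x₂]] is s-Gevrey in the monomial x₁^{p'}x₂^{q'}, then there exist r > 0 and constants C, A > 0 such that each (p,q)-coefficient function f_n of f̂ converges and defines a bounded holomorphic map on the polydisk {|x₁| ≤ r, |x₂| ≤ r} with sup_{|x₁|,|x₂|≤r} ‖f_n(x₁,x₂)‖ ≤ C·Aⁿ·n!^{σ s}, where σ = max(p/p', q/q'). In other words, the image of f̂ under the operator T̂_{p,q} is a (max{p/p', q/q'}·s)-Gevrey series with coefficients in the Banach space of bounded holomorphic functions on the polydisk. -/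

import Mathlib

open Filter
open scoped Topology

noncomputable section

variable {E : Type*} [NormedAddCommGroup E] [NormedSpace ℂ E] [CompleteSpace E]

/-- A formal power series `Σ a n m x₁^n x₂^m ∈ E[[x₁,x₂]]` (given by its coefficients) is
convergent if `Σ ‖a n m‖ ρ^(n+m) < ∞` for some `ρ > 0`. -/
def PSConvergent (a : ℕ → ℕ → E) : Prop :=
  ∃ ρ : ℝ, 0 < ρ ∧ Summable fun nm : ℕ × ℕ => ‖a nm.1 nm.2‖ * ρ ^ (nm.1 + nm.2)

/-- `s`-Gevrey in the monomial `x₁^p x₂^q` (coefficient characterization). -/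
def MonomialGevrey (s : ℝ) (p q : ℕ) (a : ℕ → ℕ → E) : Prop :=
  ∃ C A : ℝ, 0 < C ∧ 0 < A ∧ ∀ n m : ℕ,
    ‖a n m‖ ≤ C * A ^ (n + m) *
      min ((n.factorial : ℝ) ^ (s / (p : ℝ))) ((m.factorial : ℝ) ^ (s / (q : ℝ)))

/-- The index set `{(m,j) | m < p ∨ j < q}` of the `(p,q)`-coefficient functions. -/
def coeffIndex (p q : ℕ) : Set (ℕ × ℕ) := {mj | mj.1 < p ∨ mj.2 < q}

/-- The `(p,q)`-coefficient function `f_n(x₁,x₂) = Σ_{(m,j) : m<p ∨ j<q} a_{np+m,nq+j} x₁^m x₂^j`. -/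
def coeffFn (a : ℕ → ℕ → E) (p q n : ℕ) (x : ℂ × ℂ) : E :=
  ∑' mj : coeffIndex p q, (x.1 ^ mj.1.1 * x.2 ^ mj.1.2) • a (n * p + mj.1.1) (n * q + mj.1.2)

/-- All the `(p,q)`-coefficient functions of `a` converge and define bounded holomorphic
maps on the polydisk of radius `r`. -/
def CoeffFnGood (a : ℕ → ℕ → E) (p q : ℕ) (r : ℝ) : Prop :=
  ∀ n : ℕ,
    (∀ x : ℂ × ℂ, ‖x.1‖ < r → ‖x.2‖ < r →
      Summable fun mj : coeffIndex p q =>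
        (x.1 ^ mj.1.1 * x.2 ^ mj.1.2) • a (n * p + mj.1.1) (n * q + mj.1.2)) ∧
    DifferentiableOn ℂ (coeffFn a p q n)
      {x : ℂ × ℂ | ‖x.1‖ < r ∧ ‖x.2‖ < r} ∧
    ∃ M : ℝ, ∀ x : ℂ × ℂ, ‖x.1‖ < r → ‖x.2‖ < r → ‖coeffFn a p q n x‖ ≤ M

/-- The monomial sector `Π_{p,q}(a,b,r)`. -/
def MSector (p q : ℕ) (a b r : ℝ) : Set (ℂ × ℂ) :=
  {x | x.1 ≠ 0 ∧ x.2 ≠ 0 ∧ ‖x.1‖ ^ p < r ∧ ‖x.2‖ ^ q < r ∧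
    ∃ θ : ℝ, a < θ ∧ θ < b ∧
      x.1 ^ p * x.2 ^ q = (‖x.1 ^ p * x.2 ^ q‖ : ℂ) * Complex.exp (θ * Complex.I)}

/-- `f` has the series `a` as `s`-Gevrey asymptotic expansion in `x₁^p x₂^q` on the
monomial sector `Π_{p,q}(a₀,b₀,r)`. -/
def HasMAsymp (a : ℕ → ℕ → E) (s : ℝ) (p q : ℕ) (f : ℂ × ℂ → E) (a₀ b₀ r : ℝ) : Prop :=
  ∃ r' : ℝ, 0 < r' ∧ r' ≤ r ∧ CoeffFnGood a p q r' ∧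
    ∀ a' b' ρ : ℝ, a₀ < a' → a' < b' → b' < b₀ → 0 < ρ → ρ < r' →
      ∃ C A : ℝ, 0 < C ∧ 0 < A ∧ ∀ N : ℕ, ∀ x ∈ MSector p q a' b' ρ,
        ‖f x - ∑ n ∈ Finset.range N, (x.1 ^ p * x.2 ^ q) ^ n • coeffFn a p q n x‖ ≤
          C * A ^ N * (N.factorial : ℝ) ^ s * ‖x.1 ^ p * x.2 ^ q‖ ^ N

/-- `f` is a `k`-sum of the series `a` in the monomial `x₁^p x₂^q` in direction `d` :
it is holomorphic on a monomial sector bisected by `d` of opening `> π/k` and has `a`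
as `(1/k)`-Gevrey asymptotic expansion in `x₁^p x₂^q` there. -/
def IsMSum (a : ℕ → ℕ → E) (k : ℝ) (p q : ℕ) (d : ℝ) (f : ℂ × ℂ → E) : Prop :=
  ∃ a₀ b₀ r : ℝ, Real.pi / k < b₀ - a₀ ∧ d = (a₀ + b₀) / 2 ∧ 0 < r ∧
    DifferentiableOn ℂ f (MSector p q a₀ b₀ r) ∧ HasMAsymp a (1 / k) p q f a₀ b₀ r

/-- `k`-summability in the monomial `x₁^p x₂^q` in direction `d`. -/
def MSummableDir (a : ℕ → ℕ → E) (k : ℝ) (p q : ℕ) (d : ℝ) : Prop :=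
  ∃ f : ℂ × ℂ → E, IsMSum a k p q d f

/-- `k`-summability in the monomial `x₁^p x₂^q` : summability in every direction outside
finitely many exceptional directions mod `2π`. -/
def MSummable (a : ℕ → ℕ → E) (k : ℝ) (p q : ℕ) : Prop :=
  ∃ D : Finset ℝ, ∀ d : ℝ, (∀ e ∈ D, ∀ m : ℤ, d ≠ e + 2 * Real.pi * m) →
    MSummableDir a k p q d

/-- Coefficients of `f̂ ∘ π₁`, where `π₁(x₁,x₂) = (x₁x₂, x₂)`. -/
def blowCoeff₁ (a : ℕ → ℕ → E) : ℕ → ℕ → E := fun n m => if n ≤ m then a n (m - n) else 0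

/-- Coefficients of `f̂ ∘ π₂`, where `π₂(x₁,x₂) = (x₁, x₁x₂)`. -/
def blowCoeff₂ (a : ℕ → ℕ → E) : ℕ → ℕ → E := fun n m => if m ≤ n then a (n - m) m else 0

/-- The sector `V(a,b,r)` in one variable. -/
def Sector1 (a b r : ℝ) : Set ℂ :=
  {x | x ≠ 0 ∧ ‖x‖ < r ∧ ∃ θ : ℝ, a < θ ∧ θ < b ∧
    x = (‖x‖ : ℂ) * Complex.exp (θ * Complex.I)}

/-- `f` is a `k`-sum in the variable `x₁`, in direction `d`, of the series
`Σ c n (x₂) x₁ⁿ` with coefficients `c n` holomorphic and bounded on the disk `D_R`. -/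
def IsSum1 (c : ℕ → ℂ → E) (R k d : ℝ) (f : ℂ → ℂ → E) : Prop :=
  ∃ a₀ b₀ r : ℝ, Real.pi / k < b₀ - a₀ ∧ d = (a₀ + b₀) / 2 ∧ 0 < r ∧
    DifferentiableOn ℂ (fun z : ℂ × ℂ => f z.1 z.2) (Sector1 a₀ b₀ r ×ˢ Metric.ball (0 : ℂ) R) ∧
    ∀ a' b' r' : ℝ, a₀ < a' → a' < b' → b' < b₀ → 0 < r' → r' < r →
      ∃ C A : ℝ, 0 < C ∧ 0 < A ∧ ∀ N : ℕ, ∀ x₁ ∈ Sector1 a' b' r', ∀ x₂ ∈ Metric.ball (0 : ℂ) R,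
        ‖f x₁ x₂ - ∑ n ∈ Finset.range N, x₁ ^ n • c n x₂‖ ≤
          C * A ^ N * (N.factorial : ℝ) ^ (1 / k) * ‖x₁‖ ^ N

/-- `k`-summability in the first variable, in direction `d`. -/
def Summable1Dir (c : ℕ → ℂ → E) (R k d : ℝ) : Prop := ∃ f, IsSum1 c R k d f

/-- `k`-summability in the first variable : summability in every direction outside
finitely many exceptional directions mod `2π`. -/
def Summable1 (c : ℕ → ℂ → E) (R k : ℝ) : Prop :=
  ∃ D : Finset ℝ, ∀ d : ℝ, (∀ e ∈ D, ∀ m : ℤ, d ≠ e + 2 * Real.pi * m) →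
    Summable1Dir c R k d

/-- The rows `x₂ ↦ Σ_m a n m x₂^m` of a double series. -/
def rowFn (a : ℕ → ℕ → E) (n : ℕ) (x : ℂ) : E := ∑' m : ℕ, x ^ m • a n m

/-- The columns `x₁ ↦ Σ_n a n m x₁^n` of a double series. -/
def colFn (a : ℕ → ℕ → E) (m : ℕ) (x : ℂ) : E := ∑' n : ℕ, x ^ n • a n m

/-- Each row of `a` converges and defines a bounded (holomorphic) function on `D_r`. -/
def RowsGood (a : ℕ → ℕ → E) (r : ℝ) : Prop :=
  ∀ n : ℕ, (∀ x : ℂ, ‖x‖ < r → Summable fun m : ℕ => x ^ m • a n m) ∧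
    ∃ M : ℝ, ∀ x : ℂ, ‖x‖ < r → ‖rowFn a n x‖ ≤ M

/-- Each column of `a` converges and defines a bounded (holomorphic) function on `D_r`. -/
def ColsGood (a : ℕ → ℕ → E) (r : ℝ) : Prop :=
  ∀ m : ℕ, (∀ x : ℂ, ‖x‖ < r → Summable fun n : ℕ => x ^ n • a n m) ∧
    ∃ M : ℝ, ∀ x : ℂ, ‖x‖ < r → ‖colFn a m x‖ ≤ M

lemma fact_add_le (a b : ℕ) : (a + b).factorial ≤ a.factorial * (a + b) ^ b := by
  induction b with
  | zero => simp
  | succ b ih =>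
    have h1 : (a + (b+1)).factorial = (a + b + 1) * (a + b).factorial := by
      rw [← Nat.add_assoc]; exact Nat.factorial_succ _
    have h2 : a.factorial * (a + b) ^ b ≤ a.factorial * (a + b + 1) ^ b :=
      Nat.mul_le_mul_left _ (Nat.pow_le_pow_left (Nat.le_succ _) _)
    calc (a + (b+1)).factorial = (a + b + 1) * (a + b).factorial := h1
      _ ≤ (a + b + 1) * (a.factorial * (a + b) ^ b) := Nat.mul_le_mul_left _ ih
      _ ≤ (a + b + 1) * (a.factorial * (a + b + 1) ^ b) := Nat.mul_le_mul_left _ h2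
      _ = a.factorial * (a + (b+1)) ^ (b+1) := by
          rw [show a + (b+1) = a + b + 1 by omega, pow_succ]; ring

lemma fact_mul_le (p n : ℕ) : (n * p).factorial ≤ n.factorial ^ p * (p ^ p) ^ n := by
  induction n with
  | zero => simp
  | succ n ih =>
    have h1 : ((n+1) * p).factorial ≤ (n * p).factorial * ((n+1) * p) ^ p := by
      have := fact_add_le (n * p) p
      rwa [show n * p + p = (n+1) * p by ring] at this
    calc ((n+1) * p).factorial ≤ (n * p).factorial * ((n+1) * p) ^ p := h1
      _ ≤ (n.factorial ^ p * (p ^ p) ^ n) * ((n+1) * p) ^ p := by gcongr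
      _ = ((n+1).factorial) ^ p * (p ^ p) ^ (n+1) := by
          rw [Nat.factorial_succ, mul_pow, mul_pow, pow_succ]; ring

lemma fact_key (p n m : ℕ) (hm : m ≤ p) :
    (n * p + m).factorial ≤ n.factorial ^ p * (2 ^ p * p ^ p) ^ (n + 1) := by
  have h1 : (n * p + m).factorial ≤ ((n+1) * p).factorial :=
    Nat.factorial_le (by rw [Nat.succ_mul]; omega)
  have h2 := fact_mul_le p (n+1)
  have h3 : ((n+1).factorial) ^ p ≤ (n.factorial * 2 ^ n) ^ p := by
    gcongr
    rw [Nat.factorial_succ, mul_comm]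
    exact Nat.mul_le_mul_left _ (Nat.lt_two_pow_self (n := n))
  have h4 : (2:ℕ) ^ (n * p) ≤ 2 ^ ((n+1) * p) :=
    Nat.pow_le_pow_right (by norm_num) (Nat.mul_le_mul_right p (n.le_succ))
  calc (n * p + m).factorial ≤ ((n+1).factorial) ^ p * (p ^ p) ^ (n+1) := h1.trans h2
    _ ≤ (n.factorial * 2 ^ n) ^ p * (p ^ p) ^ (n+1) := Nat.mul_le_mul_right _ h3
    _ = n.factorial ^ p * (2 ^ (n * p)) * (p ^ p) ^ (n+1) := by
        rw [Nat.mul_pow, ← Nat.pow_mul]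
    _ ≤ n.factorial ^ p * (2 ^ ((n+1) * p)) * (p ^ p) ^ (n+1) :=
        Nat.mul_le_mul_right _ (Nat.mul_le_mul_left _ h4)
    _ = n.factorial ^ p * (2 ^ p * p ^ p) ^ (n+1) := by
        rw [Nat.mul_pow, ← Nat.pow_mul, Nat.mul_comm p (n+1)]; ring

lemma rpow_fact_bound {p p' : ℕ} {s σ : ℝ} (hs : 0 ≤ s)
    (hσ : (p : ℝ) / (p' : ℝ) * s ≤ σ) (n m : ℕ) (hm : m ≤ p) :
    ((n * p + m).factorial : ℝ) ^ (s / (p' : ℝ)) ≤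
      (n.factorial : ℝ) ^ σ * ((((2 ^ p * p ^ p : ℕ)) : ℝ) ^ (s / (p' : ℝ))) ^ (n + 1) := by
  have hp'0 : (0:ℝ) ≤ (p' : ℝ) := by positivity
  have hsp' : 0 ≤ s / (p' : ℝ) := div_nonneg hs hp'0
  set B : ℕ := 2 ^ p * p ^ p with hB
  have hBpos : 0 < B := by
    rcases Nat.eq_zero_or_pos p with h | h
    · subst h; simp [hB]
    · positivity
  have hB0 : (0:ℝ) ≤ (B : ℝ) := by positivity
  have h0 : ((n * p + m).factorial : ℝ) ≤ ((n.factorial : ℝ)) ^ p * (B : ℝ) ^ (n + 1) := by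
    exact_mod_cast fact_key p n m hm
  have hf1 : (1 : ℝ) ≤ (n.factorial : ℝ) := by
    have := n.factorial_pos
    exact_mod_cast this
  have hBp : ((B:ℝ) ^ ((n:ℕ)+1)) ^ (s/(p':ℝ)) = ((B:ℝ) ^ (s/(p':ℝ))) ^ (n+1) := by
    rw [← Real.rpow_natCast (B:ℝ) (n+1), ← Real.rpow_mul hB0,
      ← Real.rpow_natCast ((B:ℝ) ^ (s/(p':ℝ))) (n+1), ← Real.rpow_mul hB0, mul_comm]
  have hexp : (p : ℝ) * (s / (p' : ℝ)) ≤ σ := by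
    calc (p : ℝ) * (s / (p' : ℝ)) = (p : ℝ) / (p' : ℝ) * s := by ring
      _ ≤ σ := hσ
  calc ((n * p + m).factorial : ℝ) ^ (s / (p' : ℝ))
      ≤ (((n.factorial : ℝ)) ^ p * (B : ℝ) ^ (n + 1)) ^ (s / (p' : ℝ)) :=
        Real.rpow_le_rpow (by positivity) h0 hsp'
    _ = ((n.factorial : ℝ) ^ p) ^ (s / (p' : ℝ)) * ((B : ℝ) ^ (n + 1)) ^ (s / (p' : ℝ)) :=
        Real.mul_rpow (by positivity) (by positivity)
    _ = (n.factorial : ℝ) ^ ((p : ℝ) * (s / (p' : ℝ))) * ((B : ℝ) ^ (s/(p':ℝ))) ^ (n + 1) := by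
        rw [← Real.rpow_natCast ((n.factorial : ℝ)) p, ← Real.rpow_mul (by positivity), hBp]
    _ ≤ (n.factorial : ℝ) ^ σ * ((B : ℝ) ^ (s / (p' : ℝ))) ^ (n + 1) :=
        mul_le_mul_of_nonneg_right (Real.rpow_le_rpow_of_exponent_le hf1 hexp) (by positivity)




noncomputable def mDeriv (m j : ℕ) (c : E) (x : ℂ × ℂ) : (ℂ × ℂ) →L[ℂ] E :=
  ((x.1 ^ m • (((j : ℂ) * x.2 ^ (j - 1)) • ContinuousLinearMap.snd ℂ ℂ ℂ) +
    x.2 ^ j • (((m : ℂ) * x.1 ^ (m - 1)) • ContinuousLinearMap.fst ℂ ℂ ℂ)).smulRight c)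

lemma monomial_hasFDerivAt (m j : ℕ) (c : E) (x : ℂ × ℂ) :
    HasFDerivAt (fun y : ℂ × ℂ => (y.1 ^ m * y.2 ^ j) • c) (mDeriv m j c x) x := by
  have h1 : HasFDerivAt (fun y : ℂ × ℂ => y.1 ^ m)
      (((m : ℂ) * x.1 ^ (m - 1)) • ContinuousLinearMap.fst ℂ ℂ ℂ) x :=
    (hasDerivAt_pow m x.1).comp_hasFDerivAt x hasFDerivAt_fst
  have h2 : HasFDerivAt (fun y : ℂ × ℂ => y.2 ^ j)
      (((j : ℂ) * x.2 ^ (j - 1)) • ContinuousLinearMap.snd ℂ ℂ ℂ) x :=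
    (hasDerivAt_pow j x.2).comp_hasFDerivAt x hasFDerivAt_snd
  exact (h1.mul h2).smul_const c

lemma smul_smul_norm_bound (mm : ℕ) (α : ℂ) (z : ℂ) (S : (ℂ × ℂ) →L[ℂ] ℂ)
    (hS : ‖S‖ ≤ 1) : ‖z ^ mm • (α • S)‖ ≤ ‖z‖ ^ mm * ‖α‖ := by
  have h1 := norm_smul (z ^ mm) (α • S)
  have h2 := norm_smul α S
  rw [h2] at h1
  rw [h1, norm_pow]
  have : ‖α‖ * ‖S‖ ≤ ‖α‖ * 1 := mul_le_mul_of_nonneg_left hS (norm_nonneg _)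
  calc ‖z‖ ^ mm * (‖α‖ * ‖S‖) ≤ ‖z‖ ^ mm * (‖α‖ * 1) :=
        mul_le_mul_of_nonneg_left this (by positivity)
    _ = ‖z‖ ^ mm * ‖α‖ := by ring

lemma monomial_fderiv_norm_le (m j : ℕ) (c : E) (x : ℂ × ℂ) {r : ℝ} (hr0 : 0 < r)
    (hx1 : ‖x.1‖ ≤ r) (hx2 : ‖x.2‖ ≤ r) :
    ‖mDeriv m j c x‖ ≤ (((m : ℝ) + j) * r ^ (m + j) / r) * ‖c‖ := by
  have hn1 : ‖x.1‖ ≤ r := by exact hx1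
  have hn2 : ‖x.2‖ ≤ r := by exact hx2
  have hsnd : ‖ContinuousLinearMap.snd ℂ ℂ ℂ‖ ≤ 1 :=
    ContinuousLinearMap.opNorm_le_bound _ zero_le_one fun y => by
      simpa using norm_snd_le y
  have hfst : ‖ContinuousLinearMap.fst ℂ ℂ ℂ‖ ≤ 1 :=
    ContinuousLinearMap.opNorm_le_bound _ zero_le_one fun y => by
      simpa using norm_fst_le y
  rw [mDeriv, ContinuousLinearMap.norm_smulRight_apply]
  have key : ‖x.1 ^ m • (((j : ℂ) * x.2 ^ (j - 1)) • ContinuousLinearMap.snd ℂ ℂ ℂ) +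
      x.2 ^ j • (((m : ℂ) * x.1 ^ (m - 1)) • ContinuousLinearMap.fst ℂ ℂ ℂ)‖ ≤
      ((m : ℝ) + j) * r ^ (m + j) / r := by
    have t2 : ‖x.1 ^ m • (((j : ℂ) * x.2 ^ (j - 1)) • ContinuousLinearMap.snd ℂ ℂ ℂ)‖ ≤
        (j : ℝ) * r ^ (m + j) / r := by
      refine (smul_smul_norm_bound m _ _ _ hsnd).trans ?_
      rw [norm_mul, norm_pow, Complex.norm_natCast]
      rcases Nat.eq_zero_or_pos j with hj | hj
      · subst hj; simp
      · have e3 : r ^ m * r ^ (j - 1) = r ^ (m + j) / r := by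
          rw [eq_div_iff hr0.ne', mul_assoc, ← pow_succ, ← pow_add]; congr 1; omega
        calc ‖x.1‖ ^ m * ((j : ℝ) * ‖x.2‖ ^ (j - 1))
            ≤ r ^ m * ((j : ℝ) * r ^ (j - 1)) := by
              apply mul_le_mul (pow_le_pow_left₀ (norm_nonneg _) hn1 m)
                (mul_le_mul_of_nonneg_left (pow_le_pow_left₀ (norm_nonneg _) hn2 _)
                  (by positivity)) (by positivity) (by positivity)
          _ = (j : ℝ) * (r ^ m * r ^ (j - 1)) := by ring
          _ = (j : ℝ) * r ^ (m + j) / r := by rw [e3]; ring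
    have t1 : ‖x.2 ^ j • (((m : ℂ) * x.1 ^ (m - 1)) • ContinuousLinearMap.fst ℂ ℂ ℂ)‖ ≤
        (m : ℝ) * r ^ (m + j) / r := by
      refine (smul_smul_norm_bound j _ _ _ hfst).trans ?_
      rw [norm_mul, norm_pow, Complex.norm_natCast]
      rcases Nat.eq_zero_or_pos m with hm | hm
      · subst hm; simp
      · have e3 : r ^ j * r ^ (m - 1) = r ^ (m + j) / r := by
          rw [eq_div_iff hr0.ne', mul_assoc, ← pow_succ, ← pow_add]; congr 1; omega
        calc ‖x.2‖ ^ j * ((m : ℝ) * ‖x.1‖ ^ (m - 1))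
            ≤ r ^ j * ((m : ℝ) * r ^ (m - 1)) := by
              apply mul_le_mul (pow_le_pow_left₀ (norm_nonneg _) hn2 j)
                (mul_le_mul_of_nonneg_left (pow_le_pow_left₀ (norm_nonneg _) hn1 _)
                  (by positivity)) (by positivity) (by positivity)
          _ = (m : ℝ) * (r ^ j * r ^ (m - 1)) := by ring
          _ = (m : ℝ) * r ^ (m + j) / r := by rw [e3]; ring
    calc ‖_ + _‖ ≤ _ := norm_add_le _ _
      _ ≤ (j : ℝ) * r ^ (m + j) / r + (m : ℝ) * r ^ (m + j) / r := add_le_add t2 t1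
      _ = ((m : ℝ) + j) * r ^ (m + j) / r := by ring
  exact mul_le_mul_of_nonneg_right key (norm_nonneg _)


/-- **Lemma.** If `f̂` is `s`-Gevrey in `x₁^{p'} x₂^{q'}`, then `T̂_{p,q} f̂` is a
`(max (p/p') (q/q') · s)`-Gevrey series with coefficients bounded holomorphic functions
on a polydisk: the `(p,q)`-coefficient functions `f_n` converge and satisfy
`‖f_n‖_r ≤ C Aⁿ (n!)^{σ s}` with `σ = max (p/p') (q/q')`. -/
theorem hatT_gevrey_of_monomialGevrey
    (p q p' q' : ℕ) (hp : 0 < p) (hq : 0 < q) (hp' : 0 < p') (hq' : 0 < q')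
    (s : ℝ) (hs : 0 ≤ s) (a : ℕ → ℕ → E)
    (hgev : MonomialGevrey s p' q' a) :
    ∃ r C A : ℝ, 0 < r ∧ 0 < C ∧ 0 < A ∧ ∀ n : ℕ,
      (∀ x : ℂ × ℂ, ‖x.1‖ ≤ r → ‖x.2‖ ≤ r →
        Summable fun mj : coeffIndex p q =>
          (x.1 ^ mj.1.1 * x.2 ^ mj.1.2) • a (n * p + mj.1.1) (n * q + mj.1.2)) ∧
      DifferentiableOn ℂ (coeffFn a p q n)
        {x : ℂ × ℂ | ‖x.1‖ < r ∧ ‖x.2‖ < r} ∧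
      (∀ x : ℂ × ℂ, ‖x.1‖ ≤ r → ‖x.2‖ ≤ r →
        ‖coeffFn a p q n x‖ ≤
          C * A ^ n * (n.factorial : ℝ) ^ (max ((p : ℝ) / (p' : ℝ)) ((q : ℝ) / (q' : ℝ)) * s)) := by
  obtain ⟨C, A, hC, hA, hb⟩ := hgev
  set σ : ℝ := max ((p : ℝ) / (p' : ℝ)) ((q : ℝ) / (q' : ℝ)) with hσdef
  set A₁ : ℝ := max A 1 with hA₁def
  have hA₁ : 1 ≤ A₁ := le_max_right _ _
  have hA₁0 : 0 < A₁ := lt_of_lt_of_le one_pos hA₁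
  set r : ℝ := 1 / (4 * A₁) with hrdef
  have hr0 : 0 < r := by positivity
  have hrA : r * A₁ = 1 / 4 := by rw [hrdef]; field_simp
  set D₁ : ℝ := (((2 ^ p * p ^ p : ℕ)) : ℝ) ^ (s / (p' : ℝ)) with hD₁def
  set D₂ : ℝ := (((2 ^ q * q ^ q : ℕ)) : ℝ) ^ (s / (q' : ℝ)) with hD₂def
  have hD₁0 : 0 ≤ D₁ := Real.rpow_nonneg (by positivity) _
  have hD₂0 : 0 ≤ D₂ := Real.rpow_nonneg (by positivity) _
  set D : ℝ := max D₁ D₂ with hDdef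
  have hD1 : 1 ≤ D := by
    have hB1 : (1 : ℝ) ≤ (((2 ^ p * p ^ p : ℕ)) : ℝ) := by
      have : 1 ≤ 2 ^ p * p ^ p := Nat.one_le_iff_ne_zero.2 (by
        have : 0 < 2 ^ p * p ^ p := Nat.mul_pos (Nat.pow_pos (by norm_num))
          (Nat.pow_pos hp)
        omega)
      exact_mod_cast this
    have : (1 : ℝ) ≤ D₁ := by
      have := Real.rpow_le_rpow_of_exponent_le hB1
        (le_of_eq rfl : s / (p' : ℝ) ≤ s / (p' : ℝ))
      calc (1:ℝ) = (((2 ^ p * p ^ p : ℕ)) : ℝ) ^ (0:ℝ) := (Real.rpow_zero _).symm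
        _ ≤ D₁ := Real.rpow_le_rpow_of_exponent_le hB1 (by positivity)
    exact this.trans (le_max_left _ _)
  have hD0 : 0 < D := lt_of_lt_of_le one_pos hD1
  -- the min bound
  have hmin : ∀ n m j : ℕ, m < p ∨ j < q →
      min (((n * p + m).factorial : ℝ) ^ (s / (p' : ℝ)))
        (((n * q + j).factorial : ℝ) ^ (s / (q' : ℝ))) ≤
      (n.factorial : ℝ) ^ (σ * s) * D ^ (n + 1) := by
    intro n m j hmj
    have hfpos : (0:ℝ) ≤ (n.factorial : ℝ) ^ (σ * s) := Real.rpow_nonneg (by positivity) _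
    rcases hmj with hm | hj
    · refine (min_le_left _ _).trans ?_
      refine (rpow_fact_bound hs (mul_le_mul_of_nonneg_right
        (le_max_left ((p:ℝ)/(p':ℝ)) ((q:ℝ)/(q':ℝ))) hs) n m hm.le).trans ?_
      exact mul_le_mul_of_nonneg_left (pow_le_pow_left₀ hD₁0 (le_max_left _ _) _) hfpos
    · refine (min_le_right _ _).trans ?_
      refine (rpow_fact_bound hs (mul_le_mul_of_nonneg_right
        (le_max_right ((p:ℝ)/(p':ℝ)) ((q:ℝ)/(q':ℝ))) hs) n j hj.le).trans ?_
      exact mul_le_mul_of_nonneg_left (pow_le_pow_left₀ hD₂0 (le_max_right _ _) _) hfpos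
  -- the coefficient bound
  set K : ℕ → ℝ := fun n => C * D * ((A₁ ^ (p + q) * D) ^ n * (n.factorial : ℝ) ^ (σ * s))
    with hKdef
  have hK0 : ∀ n, 0 < K n := by
    intro n
    have : (0:ℝ) < (n.factorial : ℝ) ^ (σ * s) :=
      Real.rpow_pos_of_pos (by exact_mod_cast n.factorial_pos) _
    positivity
  have hcoef : ∀ n m j : ℕ, m < p ∨ j < q →
      ‖a (n * p + m) (n * q + j)‖ ≤ K n * A₁ ^ (m + j) := by
    intro n m j hmj
    have h1 := hb (n * p + m) (n * q + j)
    have hminb := hmin n m j hmj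
    have h2 : A ^ (n * p + m + (n * q + j)) ≤ A₁ ^ (n * (p + q) + (m + j)) := by
      rw [show n * p + m + (n * q + j) = n * (p + q) + (m + j) by ring]
      exact pow_le_pow_left₀ hA.le (le_max_left _ _) _
    have hminpos : (0:ℝ) ≤ min (((n * p + m).factorial : ℝ) ^ (s / (p' : ℝ)))
        (((n * q + j).factorial : ℝ) ^ (s / (q' : ℝ))) :=
      le_min (Real.rpow_nonneg (by positivity) _) (Real.rpow_nonneg (by positivity) _)
    calc ‖a (n * p + m) (n * q + j)‖ ≤ C * A ^ (n * p + m + (n * q + j)) * _ := h1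
      _ ≤ C * A₁ ^ (n * (p + q) + (m + j)) *
          ((n.factorial : ℝ) ^ (σ * s) * D ^ (n + 1)) := by
          apply mul_le_mul (mul_le_mul_of_nonneg_left h2 hC.le) hminb hminpos (by positivity)
      _ = K n * A₁ ^ (m + j) := by
          simp only [hKdef]
          rw [pow_add, pow_mul, mul_pow, pow_succ]
          ring
  refine ⟨r, 16 * A₁ * (C * D), A₁ ^ (p + q) * D, hr0, by positivity, by positivity, ?_⟩
  intro n
  -- bound on individual terms
  have hF : ∀ m j : ℕ, m < p ∨ j < q → ∀ x : ℂ × ℂ, ‖x.1‖ ≤ r →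
      ‖x.2‖ ≤ r →
      ‖(x.1 ^ m * x.2 ^ j) • a (n * p + m) (n * q + j)‖ ≤ K n * (1/4 : ℝ) ^ (m + j) := by
    intro m j hmj x hx1 hx2
    have hn1 : ‖x.1‖ ≤ r := by exact hx1
    have hn2 : ‖x.2‖ ≤ r := by exact hx2
    calc ‖(x.1 ^ m * x.2 ^ j) • a (n * p + m) (n * q + j)‖
        = ‖x.1‖ ^ m * ‖x.2‖ ^ j * ‖a (n * p + m) (n * q + j)‖ := by
          rw [norm_smul, norm_mul, norm_pow, norm_pow]
      _ ≤ r ^ m * r ^ j * (K n * A₁ ^ (m + j)) := by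
          apply mul_le_mul (mul_le_mul (pow_le_pow_left₀ (norm_nonneg _) hn1 m)
            (pow_le_pow_left₀ (norm_nonneg _) hn2 j) (by positivity) (by positivity))
            (hcoef n m j hmj) (norm_nonneg _) (by positivity)
      _ = K n * (r * A₁) ^ (m + j) := by rw [mul_pow, ← pow_add, pow_add]; ring
      _ = K n * (1/4 : ℝ) ^ (m + j) := by rw [hrA]
  -- the majorant
  set u : ℕ × ℕ → ℝ := fun mj => (4 * A₁ * K n) * ((1/2 : ℝ) ^ mj.1 * (1/2 : ℝ) ^ mj.2)
    with hudef
  have hu0 : ∀ mj, 0 ≤ u mj := fun mj => by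
    have := (hK0 n).le
    positivity
  have hugeo : Summable fun mj : ℕ × ℕ => ((1/2 : ℝ) ^ mj.1 * (1/2 : ℝ) ^ mj.2) :=
    summable_geometric_two.mul_of_nonneg summable_geometric_two
      (fun _ => by positivity) (fun _ => by positivity)
  have hu : Summable u := hugeo.mul_left _
  have hquarter : ∀ m j : ℕ, K n * (1/4 : ℝ) ^ (m + j) ≤ u (m, j) := by
    intro m j
    rw [hudef]
    simp only
    rw [← pow_add]
    have h14 : ((1:ℝ)/4) ^ (m + j) ≤ (1/2 : ℝ) ^ (m + j) :=
      pow_le_pow_left₀ (by norm_num) (by norm_num) _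
    have h4A : (1:ℝ) ≤ 4 * A₁ := by nlinarith
    calc K n * (1/4 : ℝ) ^ (m + j) ≤ K n * (1/2 : ℝ) ^ (m + j) :=
          mul_le_mul_of_nonneg_left h14 (hK0 n).le
      _ ≤ (4 * A₁ * K n) * (1/2 : ℝ) ^ (m + j) := by
          apply mul_le_mul_of_nonneg_right _ (by positivity)
          nlinarith [hK0 n]
  have hmem : ∀ mj : coeffIndex p q, mj.1.1 < p ∨ mj.1.2 < q := fun mj => mj.2
  -- summability
  have hsum : ∀ x : ℂ × ℂ, ‖x.1‖ ≤ r → ‖x.2‖ ≤ r →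
      Summable fun mj : coeffIndex p q =>
        (x.1 ^ mj.1.1 * x.2 ^ mj.1.2) • a (n * p + mj.1.1) (n * q + mj.1.2) := by
    intro x hx1 hx2
    apply Summable.of_norm_bounded (hu.subtype _)
    intro mj
    exact (hF mj.1.1 mj.1.2 (hmem mj) x hx1 hx2).trans (hquarter _ _)
  refine ⟨hsum, ?_, ?_⟩
  · -- differentiability
    set S : Set (ℂ × ℂ) := {x : ℂ × ℂ | ‖x.1‖ < r ∧ ‖x.2‖ < r} with hSdef
    have hopen : IsOpen S :=
      ((isOpen_lt (continuous_norm.comp continuous_fst) continuous_const).and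
        (isOpen_lt (continuous_norm.comp continuous_snd) continuous_const))
    set G : coeffIndex p q → (ℂ × ℂ) → E := fun mj x =>
      (x.1 ^ mj.1.1 * x.2 ^ mj.1.2) • a (n * p + mj.1.1) (n * q + mj.1.2) with hGdef
    set G' : coeffIndex p q → (ℂ × ℂ) → (ℂ × ℂ) →L[ℂ] E := fun mj x =>
      mDeriv mj.1.1 mj.1.2 (a (n * p + mj.1.1) (n * q + mj.1.2)) x with hG'def
    have hG'le : ∀ (mj : coeffIndex p q) (x : ℂ × ℂ), x ∈ S → ‖G' mj x‖ ≤ u mj.1 := by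
      intro mj x hx
      obtain ⟨hx1, hx2⟩ := hx
      refine (monomial_fderiv_norm_le mj.1.1 mj.1.2 _ x hr0 hx1.le hx2.le).trans ?_
      set m := mj.1.1 with hmdef
      set j := mj.1.2 with hjdef
      have hc := hcoef n m j (hmem mj)
      have hstep : (((m : ℝ) + j) * r ^ (m + j) / r) * ‖a (n * p + m) (n * q + j)‖ ≤
          (((m : ℝ) + j) * r ^ (m + j) / r) * (K n * A₁ ^ (m + j)) :=
        mul_le_mul_of_nonneg_left hc (by positivity)
      refine hstep.trans ?_
      have hpow2 : ((m : ℝ) + j) ≤ 2 ^ (m + j) := by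
        calc ((m : ℝ) + j) = ((m + j : ℕ) : ℝ) := by push_cast; ring
          _ ≤ ((2 ^ (m + j) : ℕ) : ℝ) := by exact_mod_cast (Nat.lt_two_pow_self (n := m + j)).le
          _ = 2 ^ (m + j) := by push_cast; ring
      have hrpow : r ^ (m + j) * A₁ ^ (m + j) = (1/4 : ℝ) ^ (m + j) := by
        rw [← mul_pow, hrA]
      have e1 : r ^ (m + j) / r * A₁ ^ (m + j) = (1/4 : ℝ) ^ (m + j) / r := by
        rw [← hrpow]; ring
      have e2 : (1/4 : ℝ) ^ (m + j) / r = (1/4 : ℝ) ^ (m + j) * (4 * A₁) := by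
        rw [hrdef, div_div_eq_mul_div, div_one]
      have hfinal : (((m : ℝ) + j) * r ^ (m + j) / r) * (K n * A₁ ^ (m + j)) ≤
          (4 * A₁ * K n) * ((1/2 : ℝ) ^ m * (1/2 : ℝ) ^ j) := by
        calc (((m : ℝ) + j) * r ^ (m + j) / r) * (K n * A₁ ^ (m + j))
            = ((m : ℝ) + j) * (r ^ (m + j) / r * A₁ ^ (m + j)) * K n := by ring
          _ = ((m : ℝ) + j) * ((1/4 : ℝ) ^ (m + j) * (4 * A₁)) * K n := by rw [e1, e2]
          _ ≤ 2 ^ (m + j) * ((1/4 : ℝ) ^ (m + j) * (4 * A₁)) * K n := by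
              apply mul_le_mul_of_nonneg_right
                (mul_le_mul_of_nonneg_right hpow2 (by positivity)) (hK0 n).le
          _ = (4 * A₁ * K n) * ((2 * (1/4 : ℝ)) ^ (m + j)) := by rw [mul_pow]; ring
          _ = (4 * A₁ * K n) * ((1/2 : ℝ) ^ m * (1/2 : ℝ) ^ j) := by
              rw [show (2 * (1/4 : ℝ)) = 1/2 by norm_num, pow_add]
      exact hfinal.trans (le_of_eq (by rw [hudef]))
    have husub : Summable fun mj : coeffIndex p q => u mj.1 := hu.subtype _
    have htuo : TendstoUniformlyOn
        (fun (t : Finset ↥(coeffIndex p q)) x => ∑ mj ∈ t, G' mj x)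
        (fun x => ∑' mj, G' mj x) atTop S :=
      tendstoUniformlyOn_tsum husub hG'le
    intro x hx
    have hder : HasFDerivAt (coeffFn a p q n) ((fun y => ∑' mj, G' mj y) x) x := by
      apply hasFDerivAt_of_tendstoLocallyUniformlyOn hopen htuo.tendstoLocallyUniformlyOn
        (fun t y hy => HasFDerivAt.sum
          (fun mj _ => monomial_hasFDerivAt mj.1.1 mj.1.2 (a (n * p + mj.1.1) (n * q + mj.1.2)) y))
        ?_ hx
      intro y hy
      have h1 : Summable fun mj : coeffIndex p q => G mj y := hsum y hy.1.le hy.2.le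
      simp only [Finset.sum_apply]
      exact h1.hasSum
    exact hder.differentiableAt.differentiableWithinAt
  · -- norm bound
    intro x hx1 hx2
    have hsx := hsum x hx1 hx2
    have hsn : Summable fun mj : coeffIndex p q =>
        ‖(x.1 ^ mj.1.1 * x.2 ^ mj.1.2) • a (n * p + mj.1.1) (n * q + mj.1.2)‖ :=
      Summable.of_nonneg_of_le (fun _ => norm_nonneg _)
        (fun mj => (hF mj.1.1 mj.1.2 (hmem mj) x hx1 hx2).trans (hquarter _ _))
        (hu.subtype _)
    have husub : Summable fun mj : coeffIndex p q => u mj.1 := hu.subtype _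
    have hgn : Summable fun k : ℕ => ‖(1/2 : ℝ) ^ k‖ := by
      simpa [Real.norm_eq_abs, abs_of_nonneg] using summable_geometric_two
    have htsum_u : ∑' mj : ℕ × ℕ, u mj = (4 * A₁ * K n) * 4 := by
      rw [hudef, tsum_mul_left]
      have := tsum_mul_tsum_of_summable_norm hgn hgn
      rw [← this, tsum_geometric_two]
      norm_num
    calc ‖coeffFn a p q n x‖
        ≤ ∑' mj : coeffIndex p q,
            ‖(x.1 ^ mj.1.1 * x.2 ^ mj.1.2) • a (n * p + mj.1.1) (n * q + mj.1.2)‖ := by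
          rw [coeffFn]; exact norm_tsum_le_tsum_norm hsn
      _ ≤ ∑' mj : coeffIndex p q, u mj.1 :=
          Summable.tsum_le_tsum (fun mj => (hF mj.1.1 mj.1.2 (hmem mj) x hx1 hx2).trans (hquarter _ _))
            hsn husub
      _ ≤ ∑' mj : ℕ × ℕ, u mj := Summable.tsum_subtype_le u _ hu0 hu
      _ = (4 * A₁ * K n) * 4 := htsum_u
      _ = 16 * A₁ * (C * D) * (A₁ ^ (p + q) * D) ^ n * (n.factorial : ℝ) ^ (σ * s) := by
          rw [hKdef]; ring
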